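/- The bounded subcomplex of the unbounded dwarfed d-cube is a star-like graph with d + 1 nodes and d edges: for d ≥ 2, let D = {y ∈ ℝ^d : (∀ i, 0 ≤ y i) ∧ ∀ i, (3/2) * y i − Σ_j y j ≤ 1}. Then the set of nonempty bounded exposed faces of D is exactly {{0}} ∪ {{2 • e i} : i ∈ Fin d} ∪ {segment ℝ 0 (2 • e i) : i ∈ Fin d}; in particular D has exactly 2d + 1 nonempty bounded faces. -/

import Mathlib

open Set Finset
variable {d : ℕ}

lemma repr_sum (y : EuclideanSpace ℝ (Fin d)) :
    y = ∑ j, y j • EuclideanSpace.single j (1:ℝ) := by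
  ext m
  calc y m = ∑ x, (y x • EuclideanSpace.single x (1:ℝ)) m := by
        simp [EuclideanSpace.single_apply]
    _ = _ := by simp [WithLp.ofLp_sum, Pi.single_apply]

lemma apply_eq (ℓ : EuclideanSpace ℝ (Fin d) →L[ℝ] ℝ) (y : EuclideanSpace ℝ (Fin d)) :
    ℓ y = ∑ j, y j * ℓ (EuclideanSpace.single j (1:ℝ)) := by
  conv_lhs => rw [repr_sum y]
  simp [map_sum, smul_eq_mul]

def Dset (d : ℕ) : Set (EuclideanSpace ℝ (Fin d)) :=
  {y | (∀ i, 0 ≤ y i) ∧ ∀ i, (3 / 2) * y i - ∑ j, y j ≤ 1}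

noncomputable def vert (i : Fin d) : EuclideanSpace ℝ (Fin d) :=
  (2 : ℝ) • EuclideanSpace.single i (1 : ℝ)

lemma vert_apply (i j : Fin d) : vert i j = if j = i then 2 else 0 := by
  simp [vert, EuclideanSpace.single_apply]

lemma vert_sum (i : Fin d) : ∑ j, vert i j = 2 := by
  simp [vert_apply]

lemma vert_mem (i : Fin d) : vert i ∈ Dset d := by
  refine ⟨fun m => by rw [vert_apply]; split <;> norm_num, fun m => ?_⟩
  rw [vert_sum, vert_apply]
  split <;> norm_num

lemma zero_mem : (0 : EuclideanSpace ℝ (Fin d)) ∈ Dset d := by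
  constructor <;> intro i <;> simp

lemma zero_apply' (i : Fin d) : (0 : EuclideanSpace ℝ (Fin d)) i = 0 := rfl

lemma argmaxA (ℓ : EuclideanSpace ℝ (Fin d) →L[ℝ] ℝ)
    (hc : ∀ j, ℓ (EuclideanSpace.single j (1:ℝ)) < 0) :
    {x ∈ Dset d | ∀ y ∈ Dset d, ℓ y ≤ ℓ x} = {0} := by
  have hle : ∀ y ∈ Dset d, ℓ y ≤ 0 := by
    intro y hy
    rw [apply_eq]
    apply Finset.sum_nonpos
    intro j _
    exact mul_nonpos_of_nonneg_of_nonpos (hy.1 j) (hc j).le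
  ext x
  simp only [Set.mem_setOf_eq, Set.mem_singleton_iff]
  constructor
  · rintro ⟨hxD, hmax⟩
    have h0 : (0:ℝ) ≤ ℓ x := by simpa using hmax 0 zero_mem
    have h1 : ∑ j, x j * ℓ (EuclideanSpace.single j (1:ℝ)) = 0 := by
      rw [← apply_eq]; exact le_antisymm (hle x hxD) h0
    have h2 := (Finset.sum_eq_zero_iff_of_nonpos
      (fun j _ => mul_nonpos_of_nonneg_of_nonpos (hxD.1 j) (hc j).le)).mp h1
    ext m
    have := h2 m (Finset.mem_univ m)
    have hm : x m = 0 := by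
      rcases mul_eq_zero.mp this with h | h
      · exact h
      · exact absurd h (hc m).ne
    simpa [hm]
  · rintro rfl
    exact ⟨zero_mem, fun y hy => by simpa using hle y hy⟩

lemma argmaxB1 (ℓ : EuclideanSpace ℝ (Fin d) →L[ℝ] ℝ) (i : Fin d)
    (hci : ℓ (EuclideanSpace.single i (1:ℝ)) = 0)
    (hcj : ∀ j, j ≠ i → ℓ (EuclideanSpace.single j (1:ℝ)) < 0) :
    {x ∈ Dset d | ∀ y ∈ Dset d, ℓ y ≤ ℓ x} =
      {y ∈ Dset d | ∀ j, j ≠ i → y j = 0} := by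
  have hle : ∀ y ∈ Dset d, ℓ y ≤ 0 := by
    intro y hy
    rw [apply_eq]
    apply Finset.sum_nonpos
    intro j _
    rcases eq_or_ne j i with rfl | hj
    · simp [hci]
    · exact mul_nonpos_of_nonneg_of_nonpos (hy.1 j) (hcj j hj).le
  have hzero : ∀ y ∈ Dset d, (∀ j, j ≠ i → y j = 0) → ℓ y = 0 := by
    intro y _ hy
    rw [apply_eq]
    apply Finset.sum_eq_zero
    intro j _
    rcases eq_or_ne j i with rfl | hj
    · simp [hci]
    · simp [hy j hj]
  ext x
  simp only [Set.mem_setOf_eq]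
  constructor
  · rintro ⟨hxD, hmax⟩
    have h0 : (0:ℝ) ≤ ℓ x := by simpa using hmax 0 zero_mem
    have h1 : ∑ j, x j * ℓ (EuclideanSpace.single j (1:ℝ)) = 0 := by
      rw [← apply_eq]; exact le_antisymm (hle x hxD) h0
    have h2 := (Finset.sum_eq_zero_iff_of_nonpos (fun j _ => by
      rcases eq_or_ne j i with rfl | hj
      · simp [hci]
      · exact mul_nonpos_of_nonneg_of_nonpos (hxD.1 j) (hcj j hj).le)).mp h1
    refine ⟨hxD, fun j hj => ?_⟩
    have := h2 j (Finset.mem_univ j)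
    rcases mul_eq_zero.mp this with h | h
    · exact h
    · exact absurd h (hcj j hj).ne
  · rintro ⟨hxD, hx⟩
    exact ⟨hxD, fun y hy => by rw [hzero x hxD hx]; exact hle y hy⟩

lemma sum_eq_single_coord {x : EuclideanSpace ℝ (Fin d)} {i : Fin d}
    (hx : ∀ j, j ≠ i → x j = 0) : ∑ j, x j = x i :=
  Finset.sum_eq_single_of_mem i (Finset.mem_univ i) (fun j _ hj => hx j hj)

lemma seg_eq (i : Fin d) :
    segment ℝ 0 (vert i) = {y ∈ Dset d | ∀ j, j ≠ i → y j = 0} := by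
  ext y
  rw [segment_eq_image]
  simp only [Set.mem_image, Set.mem_Icc, Set.mem_setOf_eq]
  have happ : ∀ (t : ℝ) (m : Fin d),
      ((((1 - t) • (0:EuclideanSpace ℝ (Fin d)) + t • vert i)) : EuclideanSpace ℝ (Fin d)) m
        = if m = i then 2*t else 0 := by
    intro t m
    simp [vert_apply]
    split <;> ring
  constructor
  · rintro ⟨t, ⟨ht0, ht1⟩, rfl⟩
    have hsum : ∑ j, (((1 - t) • (0:EuclideanSpace ℝ (Fin d)) + t • vert i) : EuclideanSpace ℝ (Fin d)) j = 2*t := by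
      simp only [happ]
      simp
    refine ⟨⟨fun m => ?_, fun m => ?_⟩, fun j hj => by rw [happ t j]; simp [hj]⟩
    · rw [happ t m]
      split
      · linarith
      · exact le_rfl
    · rw [happ t m, hsum]
      split <;> nlinarith
  · rintro ⟨hyD, hy⟩
    have hsum := sum_eq_single_coord hy
    have h2 : y i ≤ 2 := by
      have := hyD.2 i
      rw [hsum] at this
      linarith
    have h0 : 0 ≤ y i := hyD.1 i
    refine ⟨y i / 2, ⟨by linarith, by linarith⟩, ?_⟩
    ext m
    rw [happ (y i / 2) m]
    rcases eq_or_ne m i with rfl | hm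
    · rw [if_pos rfl]
      ring
    · simp [hm, hy m hm]

lemma argmaxB2 (ℓ : EuclideanSpace ℝ (Fin d) →L[ℝ] ℝ) (i : Fin d)
    (hci : 0 < ℓ (EuclideanSpace.single i (1:ℝ)))
    (hcj : ∀ j, j ≠ i →
      2 * ℓ (EuclideanSpace.single i (1:ℝ)) + ℓ (EuclideanSpace.single j (1:ℝ)) < 0) :
    {x ∈ Dset d | ∀ y ∈ Dset d, ℓ y ≤ ℓ x} = {vert i} := by
  set c : Fin d → ℝ := fun j => ℓ (EuclideanSpace.single j (1:ℝ)) with hc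
  have hvert : ℓ (vert i) = 2 * c i := by
    rw [apply_eq]
    rw [← Finset.add_sum_erase _ _ (Finset.mem_univ i)]
    rw [vert_apply, if_pos rfl]
    rw [Finset.sum_eq_zero (fun j hj => by
      rw [vert_apply, if_neg (Finset.ne_of_mem_erase hj), zero_mul])]
    ring
  have key : ∀ y ∈ Dset d, ℓ y ≤ 2 * c i := by
    intro y hy
    rw [apply_eq, ← Finset.add_sum_erase _ _ (Finset.mem_univ i)]
    set S := ∑ j ∈ Finset.univ.erase i, y j with hS
    have hSsum : ∑ j, y j = y i + S := (Finset.add_sum_erase _ _ (Finset.mem_univ i)).symm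
    have hS0 : 0 ≤ S := Finset.sum_nonneg (fun j _ => hy.1 j)
    have hyi : y i ≤ 2 + 2 * S := by
      have := hy.2 i
      rw [hSsum] at this
      linarith
    have h1 : ∑ j ∈ Finset.univ.erase i, y j * c j
        ≤ ∑ j ∈ Finset.univ.erase i, y j * (-(2 * c i)) := by
      apply Finset.sum_le_sum
      intro j hj
      exact mul_le_mul_of_nonneg_left (by linarith [hcj j (Finset.ne_of_mem_erase hj)]) (hy.1 j)
    have h2 : ∑ j ∈ Finset.univ.erase i, y j * (-(2 * c i)) = -(2 * c i) * S := by
      rw [← Finset.sum_mul, hS]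
      ring
    have h3 : y i * c i ≤ (2 + 2*S) * c i := mul_le_mul_of_nonneg_right hyi hci.le
    rw [h2] at h1
    nlinarith
  ext x
  simp only [Set.mem_setOf_eq, Set.mem_singleton_iff]
  constructor
  · rintro ⟨hxD, hmax⟩
    have hge : 2 * c i ≤ ℓ x := hvert ▸ hmax (vert i) (vert_mem i)
    rw [apply_eq, ← Finset.add_sum_erase _ _ (Finset.mem_univ i)] at hge
    set S := ∑ j ∈ Finset.univ.erase i, x j with hS
    have hSsum : ∑ j, x j = x i + S := (Finset.add_sum_erase _ _ (Finset.mem_univ i)).symm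
    have hxi : x i ≤ 2 + 2 * S := by
      have := hxD.2 i
      rw [hSsum] at this
      linarith
    set T := ∑ j ∈ Finset.univ.erase i, x j * c j with hT
    have hnp : ∀ j ∈ Finset.univ.erase i, (2 * c i + c j) * x j ≤ 0 :=
      fun j hj => mul_nonpos_of_nonpos_of_nonneg
        (hcj j (Finset.ne_of_mem_erase hj)).le (hxD.1 j)
    have hexp : ∑ j ∈ Finset.univ.erase i, (2 * c i + c j) * x j = 2 * c i * S + T := by
      calc ∑ j ∈ Finset.univ.erase i, (2 * c i + c j) * x j
          = ∑ j ∈ Finset.univ.erase i, (2 * c i * x j + x j * c j) :=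
            Finset.sum_congr rfl (fun j _ => by ring)
        _ = 2 * c i * S + T := by
            rw [Finset.sum_add_distrib, ← Finset.mul_sum]
    have hsum0 : 0 ≤ ∑ j ∈ Finset.univ.erase i, (2 * c i + c j) * x j := by
      rw [hexp]
      nlinarith [mul_le_mul_of_nonneg_right hxi hci.le]
    have hz := (Finset.sum_eq_zero_iff_of_nonpos hnp).mp
      (le_antisymm (Finset.sum_nonpos hnp) hsum0)
    have hx0 : ∀ j, j ≠ i → x j = 0 := by
      intro j hj
      have hmem : j ∈ Finset.univ.erase i := Finset.mem_erase.mpr ⟨hj, Finset.mem_univ j⟩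
      rcases mul_eq_zero.mp (hz j hmem) with h | h
      · exact absurd h (hcj j hj).ne
      · exact h
    have hSz : S = 0 := Finset.sum_eq_zero (fun j hj => hx0 j (Finset.ne_of_mem_erase hj))
    have hTz : T = 0 := Finset.sum_eq_zero (fun j hj => by
      rw [hx0 j (Finset.ne_of_mem_erase hj), zero_mul])
    have hxi2 : x i = 2 := by
      rw [hTz] at hge
      rw [hSz] at hxi
      nlinarith
    ext m
    rw [vert_apply]
    rcases eq_or_ne m i with rfl | hm
    · rw [if_pos rfl, hxi2]
    · rw [if_neg hm, hx0 m hm]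
  · rintro rfl
    exact ⟨vert_mem i, fun y hy => hvert ▸ key y hy⟩

noncomputable def lc (c : Fin d → ℝ) : EuclideanSpace ℝ (Fin d) →L[ℝ] ℝ :=
  ∑ j, c j • EuclideanSpace.proj j

lemma lc_single (c : Fin d → ℝ) (j : Fin d) :
    lc c (EuclideanSpace.single j (1:ℝ)) = c j := by
  simp [lc, ContinuousLinearMap.sum_apply, PiLp.proj_apply,
    EuclideanSpace.single_apply]

lemma rec_neg {F : Set (EuclideanSpace ℝ (Fin d))}
    (ℓ : EuclideanSpace ℝ (Fin d) →L[ℝ] ℝ)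
    (hF : F = {x ∈ Dset d | ∀ y ∈ Dset d, ℓ y ≤ ℓ x})
    (hb : Bornology.IsBounded F) {x : EuclideanSpace ℝ (Fin d)} (hx : x ∈ F)
    {v : EuclideanSpace ℝ (Fin d)} (hv0 : ∀ m, 0 ≤ v m)
    (hvc : ∀ m, (3 / 2) * v m - ∑ j, v j ≤ 0) (hvne : v ≠ 0) : ℓ v < 0 := by
  by_contra hcon
  push_neg at hcon
  obtain ⟨C, hC⟩ := isBounded_iff_forall_norm_le.mp hb
  have hvn : 0 < ‖v‖ := norm_pos_iff.mpr hvne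
  set t := (C + ‖x‖ + 1) / ‖v‖ with ht
  have hxF := hF ▸ hx
  obtain ⟨hxD, hmax⟩ := hxF
  have hCpos : 0 ≤ C := le_trans (norm_nonneg x) (hC x hx)
  have ht0 : 0 ≤ t := by positivity
  have hmemD : x + t • v ∈ Dset d := by
    constructor
    · intro m
      have : (x + t • v) m = x m + t * v m := rfl
      rw [this]
      have := mul_nonneg ht0 (hv0 m)
      linarith [hxD.1 m]
    · intro m
      have happ : (x + t • v) m = x m + t * v m := rfl
      have hsum : ∑ j, (x + t • v) j = ∑ j, x j + t * ∑ j, v j := by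
        rw [Finset.mul_sum, ← Finset.sum_add_distrib]
        rfl
      rw [happ, hsum]
      have h1 := hxD.2 m
      have h2 := mul_nonpos_of_nonneg_of_nonpos ht0 (hvc m)
      nlinarith
  have hmemF : x + t • v ∈ F := by
    rw [hF]
    refine ⟨hmemD, fun y hy => ?_⟩
    have : ℓ (x + t • v) = ℓ x + t * ℓ v := by
      rw [map_add, map_smul, smul_eq_mul]
    rw [this]
    have := mul_nonneg ht0 hcon
    linarith [hmax y hy]
  have hnorm := hC _ hmemF
  have h1 : ‖t • v‖ ≤ ‖x + t • v‖ + ‖x‖ := by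
    calc ‖t • v‖ = ‖(x + t • v) - x‖ := by rw [add_sub_cancel_left]
      _ ≤ ‖x + t • v‖ + ‖x‖ := norm_sub_le _ _
  have h2 : ‖t • v‖ = t * ‖v‖ := by
    rw [norm_smul, Real.norm_eq_abs, abs_of_nonneg ht0]
  have h3 : t * ‖v‖ = C + ‖x‖ + 1 := div_mul_cancel₀ _ hvn.ne'
  linarith

lemma ray_neg {F : Set (EuclideanSpace ℝ (Fin d))}
    (ℓ : EuclideanSpace ℝ (Fin d) →L[ℝ] ℝ)
    (hF : F = {x ∈ Dset d | ∀ y ∈ Dset d, ℓ y ≤ ℓ x})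
    (hb : Bornology.IsBounded F) {x : EuclideanSpace ℝ (Fin d)} (hx : x ∈ F)
    {i k : Fin d} (hik : i ≠ k) (a b : ℝ) (ha : 0 < a) (hb' : 0 ≤ b)
    (h1 : (3/2) * a ≤ a + b) (h2 : (3/2) * b ≤ a + b) :
    a * ℓ (EuclideanSpace.single i (1:ℝ)) + b * ℓ (EuclideanSpace.single k (1:ℝ)) < 0 := by
  set v : EuclideanSpace ℝ (Fin d) :=
    a • EuclideanSpace.single i (1:ℝ) + b • EuclideanSpace.single k (1:ℝ) with hv
  have happ : ∀ m, v m = (if m = i then a else 0) + (if m = k then b else 0) := by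
    intro m
    show a * EuclideanSpace.single i (1:ℝ) m + b * EuclideanSpace.single k (1:ℝ) m = _
    rw [EuclideanSpace.single_apply, EuclideanSpace.single_apply]
    split <;> split <;> ring
  have hsum : ∑ m, v m = a + b := by
    simp only [happ]
    rw [Finset.sum_add_distrib]
    simp
  have hv0 : ∀ m, 0 ≤ v m := by
    intro m
    rw [happ]
    split <;> split <;> simp_all <;> linarith
  have hvc : ∀ m, (3 / 2) * v m - ∑ j, v j ≤ 0 := by
    intro m
    rw [happ, hsum]
    rcases eq_or_ne m i with rfl | hmi
    · rw [if_pos rfl, if_neg hik]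
      linarith
    · rw [if_neg hmi]
      split <;> linarith
  have hvne : v ≠ 0 := by
    intro h
    have : v i = 0 := by rw [h]; rfl
    rw [happ, if_pos rfl, if_neg hik] at this
    linarith
  have := rec_neg ℓ hF hb hx hv0 hvc hvne
  rw [hv, map_add, map_smul, map_smul, smul_eq_mul, smul_eq_mul] at this
  exact this

lemma classify {F : Set (EuclideanSpace ℝ (Fin d))}
    (hexp : IsExposed ℝ (Dset d) F) (hne : F.Nonempty) (hb : Bornology.IsBounded F) :
    F = {0} ∨ (∃ i, F = {vert i}) ∨ (∃ i, F = segment ℝ 0 (vert i)) := by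
  obtain ⟨ℓ, hF⟩ := hexp hne
  obtain ⟨x, hx⟩ := hne
  by_cases hA : ∀ j, ℓ (EuclideanSpace.single j (1:ℝ)) < 0
  · left
    rw [hF]
    exact argmaxA ℓ hA
  · push_neg at hA
    obtain ⟨i, hi⟩ := hA
    have hcj : ∀ j, j ≠ i → ℓ (EuclideanSpace.single j (1:ℝ)) < 0 := by
      intro j hj
      have := ray_neg ℓ hF hb hx (Ne.symm hj) 1 2 one_pos (by norm_num)
        (by norm_num) (by norm_num)
      linarith
    rcases eq_or_lt_of_le hi with heq | hlt
    · right; right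
      refine ⟨i, ?_⟩
      rw [hF, argmaxB1 ℓ i heq.symm hcj]
      exact (seg_eq i).symm
    · right; left
      refine ⟨i, ?_⟩
      rw [hF]
      apply argmaxB2 ℓ i hlt
      intro j hj
      have := ray_neg ℓ hF hb hx (Ne.symm hj) 2 1 two_pos (by norm_num)
        (by norm_num) (by norm_num)
      linarith

lemma exposed_zero : IsExposed ℝ (Dset d) {0} := by
  intro _
  refine ⟨lc (fun _ => (-1:ℝ)), ?_⟩
  rw [argmaxA]
  intro j
  rw [lc_single]
  norm_num

lemma exposed_vert (i : Fin d) : IsExposed ℝ (Dset d) {vert i} := by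
  intro _
  refine ⟨lc (fun j => if j = i then (1:ℝ) else -3), ?_⟩
  rw [argmaxB2]
  · rw [lc_single, if_pos rfl]; norm_num
  · intro j hj
    rw [lc_single, lc_single, if_pos rfl, if_neg hj]
    norm_num

lemma exposed_seg (i : Fin d) : IsExposed ℝ (Dset d) (segment ℝ 0 (vert i)) := by
  intro _
  refine ⟨lc (fun j => if j = i then (0:ℝ) else -1), ?_⟩
  rw [seg_eq, argmaxB1]
  · rw [lc_single, if_pos rfl]
  · intro j hj
    rw [lc_single, if_neg hj]
    norm_num

lemma bounded_seg (i : Fin d) : Bornology.IsBounded (segment ℝ 0 (vert i)) := by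
  rw [← convexHull_pair]
  exact isBounded_convexHull.mpr
    ((Set.finite_singleton _).insert _).isBounded

lemma vert_ne_zero (i : Fin d) : vert i ≠ 0 := by
  intro h
  have h2 : vert i i = 0 := by rw [h]; rfl
  rw [vert_apply, if_pos rfl] at h2
  norm_num at h2

lemma vert_inj : Function.Injective (vert (d := d)) := by
  intro i k h
  by_contra hik
  have h2 : vert i i = vert k i := by rw [h]
  rw [vert_apply, vert_apply, if_pos rfl, if_neg hik] at h2
  norm_num at h2

lemma seg_inj : Function.Injective (fun i => segment ℝ 0 (vert (d := d) i)) := by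
  intro i k h
  simp only at h
  by_contra hik
  have h1 : vert i ∈ segment ℝ 0 (vert k) := by
    rw [← h]
    exact right_mem_segment _ _ _
  rw [seg_eq] at h1
  have := h1.2 i hik
  rw [vert_apply, if_pos rfl] at this
  norm_num at this

lemma count_lemma :
    (({{(0 : EuclideanSpace ℝ (Fin d))}} ∪ {F | ∃ i, F = {vert i}} ∪
      {F | ∃ i, F = segment ℝ 0 (vert i)}) : Set (Set (EuclideanSpace ℝ (Fin d)))).ncard
      = 2 * d + 1 := by
  set A : Set (Set (EuclideanSpace ℝ (Fin d))) := {F | ∃ i, F = {vert i}} with hA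
  set B : Set (Set (EuclideanSpace ℝ (Fin d))) := {F | ∃ i, F = segment ℝ 0 (vert i)} with hB
  have hAr : A = Set.range (fun i => ({vert i} : Set (EuclideanSpace ℝ (Fin d)))) := by
    ext F; simp [hA, eq_comm]
  have hBr : B = Set.range (fun i => segment ℝ 0 (vert (d := d) i)) := by
    ext F; simp [hB, eq_comm]
  have hinjA : Function.Injective (fun i => ({vert i} : Set (EuclideanSpace ℝ (Fin d)))) :=
    fun i k h => vert_inj (Set.singleton_injective h)
  have hAfin : A.Finite := hAr ▸ Set.finite_range _
  have hBfin : B.Finite := hBr ▸ Set.finite_range _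
  have hAcard : A.ncard = d := by
    rw [hAr, ← Set.image_univ, Set.ncard_image_of_injective _ hinjA, Set.ncard_univ,
      Nat.card_eq_fintype_card, Fintype.card_fin]
  have hBcard : B.ncard = d := by
    rw [hBr, ← Set.image_univ, Set.ncard_image_of_injective _ seg_inj, Set.ncard_univ,
      Nat.card_eq_fintype_card, Fintype.card_fin]
  have hdisj : Disjoint A B := by
    rw [Set.disjoint_left]
    rintro s ⟨i, rfl⟩ ⟨k, hk⟩
    have h0 : (0 : EuclideanSpace ℝ (Fin d)) ∈ segment ℝ 0 (vert k) :=
      left_mem_segment _ _ _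
    rw [← hk, Set.mem_singleton_iff] at h0
    exact vert_ne_zero i h0.symm
  have hnot : ({0} : Set (EuclideanSpace ℝ (Fin d))) ∉ A ∪ B := by
    rintro (⟨i, hi⟩ | ⟨i, hi⟩)
    · have : vert i ∈ ({0} : Set (EuclideanSpace ℝ (Fin d))) := by
        rw [hi]; exact rfl
      exact vert_ne_zero i this
    · have : vert i ∈ ({0} : Set (EuclideanSpace ℝ (Fin d))) := by
        rw [hi]; exact right_mem_segment _ _ _
      exact vert_ne_zero i this
  rw [Set.union_assoc, Set.singleton_union,
    Set.ncard_insert_of_notMem hnot (hAfin.union hBfin),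
    Set.ncard_union_eq hdisj hAfin hBfin, hAcard, hBcard]
  omega

/-- For `d ≥ 2`, the bounded subcomplex of the unbounded dwarfed
`d`-cube `D` consists exactly of the vertex `{0}`, the vertices `{2 eᵢ}`, and the
edges `[0, 2 eᵢ]`; in particular `D` has exactly `2d + 1` nonempty bounded faces. -/
theorem stmt_11 (d : ℕ) (hd : 2 ≤ d)
    (D : Set (EuclideanSpace ℝ (Fin d)))
    (hD : D = {y : EuclideanSpace ℝ (Fin d) |
      (∀ i, 0 ≤ y i) ∧ ∀ i, (3 / 2) * y i - ∑ j, y j ≤ 1}) :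
    {F : Set (EuclideanSpace ℝ (Fin d)) |
        IsExposed ℝ D F ∧ F.Nonempty ∧ Bornology.IsBounded F} =
      ({{0}} ∪
        {F | ∃ i : Fin d, F = {(2 : ℝ) • EuclideanSpace.single i (1 : ℝ)}} ∪
        {F | ∃ i : Fin d,
          F = segment ℝ 0 ((2 : ℝ) • EuclideanSpace.single i (1 : ℝ))}) ∧
      Set.ncard {F : Set (EuclideanSpace ℝ (Fin d)) |
          IsExposed ℝ D F ∧ F.Nonempty ∧ Bornology.IsBounded F} = 2 * d + 1 := by
  have hD' : D = Dset d := hD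
  subst hD'
  have hmain : {F : Set (EuclideanSpace ℝ (Fin d)) |
      IsExposed ℝ (Dset d) F ∧ F.Nonempty ∧ Bornology.IsBounded F} =
      ({{0}} ∪ {F | ∃ i, F = {vert i}} ∪ {F | ∃ i, F = segment ℝ 0 (vert i)}) := by
    ext F
    simp only [Set.mem_setOf_eq, Set.mem_union, Set.mem_singleton_iff]
    constructor
    · rintro ⟨hexp, hne, hb⟩
      rcases classify hexp hne hb with h | h | h
      · exact Or.inl (Or.inl h)
      · exact Or.inl (Or.inr h)
      · exact Or.inr h
    · rintro ((rfl | ⟨i, rfl⟩) | ⟨i, rfl⟩)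
      · exact ⟨exposed_zero, ⟨0, rfl⟩, Bornology.isBounded_singleton⟩
      · exact ⟨exposed_vert i, ⟨_, rfl⟩, Bornology.isBounded_singleton⟩
      · exact ⟨exposed_seg i, ⟨0, left_mem_segment _ _ _⟩, bounded_seg i⟩
  constructor
  · exact hmain
  · rw [hmain]
    exact count_lemma
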